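/- Let f: ℝ^n → ℝ be differentiable, 0 < m ≤ M, and suppose f(y) ≤ f(x) + ⟨∇f(x), y − x⟩ + (M/2)‖y − x‖₂² and f(y) ≥ f(x) + ⟨∇f(x), y − x⟩ + (m/2)‖y − x‖₂² for all x, y ∈ ℝ^n, and that f attains its minimum value f* at x*. If x⁺ ∈ ℝ^n satisfies f(x⁺) ≤ f(x − (1/M)∇f(x)), then f(x⁺) − f* ≤ (1 − m/M)(f(x) − f*). -/

import Mathlib

open scoped RealInnerProductSpace

/-- One-step contraction: under `m`-strong convexity and
`M`-smoothness (quadratic lower/upper bounds), if `f(x⁺) ≤ f(x − (1/M)∇f(x))`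
then `f(x⁺) − f* ≤ (1 − m/M)(f(x) − f*)`. -/
theorem one_step_linear_contraction {n : ℕ}
    (f : EuclideanSpace ℝ (Fin n) → ℝ) (hf : Differentiable ℝ f)
    (m M : ℝ) (hm : 0 < m) (hmM : m ≤ M)
    (hsmooth : ∀ x y : EuclideanSpace ℝ (Fin n),
      f y ≤ f x + ⟪gradient f x, y - x⟫ + M / 2 * ‖y - x‖ ^ 2)
    (hstrong : ∀ x y : EuclideanSpace ℝ (Fin n),
      f x + ⟪gradient f x, y - x⟫ + m / 2 * ‖y - x‖ ^ 2 ≤ f y)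
    (xstar : EuclideanSpace ℝ (Fin n))
    (hmin : ∀ y : EuclideanSpace ℝ (Fin n), f xstar ≤ f y)
    (x xplus : EuclideanSpace ℝ (Fin n))
    (hstep : f xplus ≤ f (x - (1 / M) • gradient f x)) :
    f xplus - f xstar ≤ (1 - m / M) * (f x - f xstar) := by
  have hM : 0 < M := lt_of_lt_of_le hm hmM
  set g := gradient f x with hg
  -- smoothness step: descent
  have h1 : f (x - (1/M) • g) ≤ f x - 1/(2*M) * ‖g‖^2 := by
    have h := hsmooth x (x - (1/M) • g)
    have hd : x - (1/M) • g - x = -((1/M) • g) := by abel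
    rw [hd] at h
    rw [inner_neg_right, real_inner_smul_right, real_inner_self_eq_norm_sq,
      norm_neg, norm_smul, Real.norm_eq_abs, abs_of_pos (by positivity : (0:ℝ) < 1/M)] at h
    have : f (x - (1/M) • g) ≤ f x + -(1/M * ‖g‖^2) + M/2 * ((1/M)*‖g‖)^2 := by
      convert h using 3 <;> ring
    have heq : f x + -(1/M * ‖g‖^2) + M/2 * ((1/M)*‖g‖)^2 = f x - 1/(2*M) * ‖g‖^2 := by
      field_simp; ring
    linarith [this, heq.le, heq.ge]
  -- strong convexity: gradient lower bound
  have h2 : 2 * m * (f x - f xstar) ≤ ‖g‖^2 := by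
    have h := hstrong x xstar
    have hcs : -(‖g‖ * ‖xstar - x‖) ≤ ⟪g, xstar - x⟫ :=
      neg_le_of_abs_le (abs_real_inner_le_norm g (xstar - x))
    nlinarith [sq_nonneg (‖g‖ - m * ‖xstar - x‖), hm]
  have h0 : 0 ≤ f x - f xstar := sub_nonneg.mpr (hmin x)
  have h3 : f xplus ≤ f x - 1/(2*M) * ‖g‖^2 := le_trans hstep h1
  have hmM' : m / M ≤ 1 := (div_le_one hM).mpr hmM
  have key : M * (f xplus - f xstar) ≤ (M - m) * (f x - f xstar) := by
    have h3' := mul_le_mul_of_nonneg_left h3 hM.le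
    have hMe : M * (f x - 1/(2*M) * ‖g‖^2) = M * f x - ‖g‖^2/2 := by field_simp
    nlinarith [h2]
  have hrw : (1 - m/M) * (f x - f xstar) = ((M - m) * (f x - f xstar)) / M := by
    field_simp
  rw [hrw, le_div_iff₀ hM]
  nlinarith [key]
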